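/- Let K be a field of characteristic zero, X a finite connected poset, u_0 ∈ X, and σ : X²_< → K a map constant on chains and constant on cycles in X. Then there exists a unique diagonality-preserving φ ∈ Δ(I(X,K)) such that φ(e_{xy}) = σ(x,y)e_{xy} for all x < y and φ(e_x)(u_0,u_0) = 0 for all x ∈ X. -/

import Mathlib

open scoped Classical

attribute [local instance 100] LieRing.ofAssociativeRing

noncomputable section

/-- A `1/2`-derivation of a Lie algebra `L` over `K`:
`φ ⁅a, b⁆ = (1/2) • (⁅φ a, b⁆ + ⁅a, φ b⁆)`. -/
def IsHalfDerivation (K L : Type*) [Field K] [LieRing L] [LieAlgebra K L]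
    (φ : L →ₗ[K] L) : Prop :=
  ∀ a b : L, φ ⁅a, b⁆ = (2⁻¹ : K) • (⁅φ a, b⁆ + ⁅a, φ b⁆)

/-- The standard basis element `e_{xy}` (for `x ≤ y`) of the incidence algebra. -/
def eI (K : Type*) {X : Type*} [Field K] [PartialOrder X] [DecidableEq X]
    (x y : X) (h : x ≤ y) : IncidenceAlgebra K X :=
  ⟨fun u v => if x = u ∧ y = v then (1 : K) else 0, by
    intro u v huv
    show (if x = u ∧ y = v then (1 : K) else 0) = 0
    rw [if_neg]; rintro ⟨rfl, rfl⟩; exact huv h⟩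

/-- Diagonal elements of the incidence algebra (the subspace `D(X,K)`). -/
def IsDiagI {K X : Type*} [Zero K] [LE X] (f : IncidenceAlgebra K X) : Prop :=
  ∀ x y : X, x ≠ y → f x y = 0

/-- A walk `u 0, u 1, …, u m` in a poset: consecutive vertices are comparable and
cover one another (`l(x,y) = 1`). -/
def IsWalkOn {X : Type*} [PartialOrder X] (u : ℕ → X) (m : ℕ) : Prop :=
  ∀ i < m, u i ⋖ u (i + 1) ∨ u (i + 1) ⋖ u i

/-- A poset is connected if any two of its elements are joined by a walk. -/
def ConnectedPoset (X : Type*) [PartialOrder X] : Prop :=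
  ∀ x y : X, ∃ (u : ℕ → X) (m : ℕ), IsWalkOn u m ∧ u 0 = x ∧ u m = y

/-- The set `X²_<` of pairs `(x, y)` with `x < y`. -/
def LtPairs (X : Type*) [PartialOrder X] : Type _ := {p : X × X // p.1 < p.2}

/-- The value of `σ : X²_< → K` at `(x, y)`, extended by `0` to all pairs. -/
def sigVal {K X : Type*} [Field K] [PartialOrder X] (σ : LtPairs X → K) (x y : X) : K :=
  if h : x < y then σ ⟨(x, y), h⟩ else 0

/-- `s⁺_{σ,Γ}(x) = Σ_{x = u i < u (i+1)} σ (x, u (i+1))`. -/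
def sP {K X : Type*} [Field K] [PartialOrder X] (σ : LtPairs X → K)
    (u : ℕ → X) (m : ℕ) (x : X) : K :=
  ∑ i ∈ Finset.range m, if x = u i then sigVal σ x (u (i + 1)) else 0

/-- `s⁻_{σ,Γ}(x) = Σ_{u i > u (i+1) = x} σ (x, u i)`. -/
def sM {K X : Type*} [Field K] [PartialOrder X] (σ : LtPairs X → K)
    (u : ℕ → X) (m : ℕ) (x : X) : K :=
  ∑ i ∈ Finset.range m, if x = u (i + 1) then sigVal σ x (u i) else 0

/-- `t⁺_{σ,Γ}(x) = Σ_{x = u i > u (i+1)} σ (u (i+1), x)`. -/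
def tP {K X : Type*} [Field K] [PartialOrder X] (σ : LtPairs X → K)
    (u : ℕ → X) (m : ℕ) (x : X) : K :=
  ∑ i ∈ Finset.range m, if x = u i then sigVal σ (u (i + 1)) x else 0

/-- `t⁻_{σ,Γ}(x) = Σ_{u i < u (i+1) = x} σ (u i, x)`. -/
def tM {K X : Type*} [Field K] [PartialOrder X] (σ : LtPairs X → K)
    (u : ℕ → X) (m : ℕ) (x : X) : K :=
  ∑ i ∈ Finset.range m, if x = u (i + 1) then sigVal σ (u i) x else 0

/-- A cycle: a closed walk `u 0, …, u m = u 0` with `m ≥ 4` such that repeated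
vertices occur only at the pair of indices `{0, m}`. -/
def IsCycleW {X : Type*} [PartialOrder X] (u : ℕ → X) (m : ℕ) : Prop :=
  IsWalkOn u m ∧ u m = u 0 ∧ 4 ≤ m ∧
    ∀ i ≤ m, ∀ j ≤ m, i ≠ j → u i = u j → (i = 0 ∧ j = m) ∨ (i = m ∧ j = 0)

/-- `σ` is constant on cycles. -/
def ConstOnCycles {K X : Type*} [Field K] [PartialOrder X] (σ : LtPairs X → K) : Prop :=
  ∀ (u : ℕ → X) (m : ℕ), IsCycleW u m →
    ∃ k : K, ∀ i < m,
      (∀ h : u i < u (i + 1), σ ⟨(u i, u (i + 1)), h⟩ = k) ∧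
      (∀ h : u (i + 1) < u i, σ ⟨(u (i + 1), u i), h⟩ = k)

/-- `σ` is constant on chains: `σ (x, y) = σ (u, v)` whenever `x < y` and `u < v` all
belong to a common chain, i.e. `{x, y, u, v}` is pairwise comparable. -/
def ConstOnChains {K X : Type*} [Field K] [PartialOrder X] (σ : LtPairs X → K) : Prop :=
  ∀ (x y u v : X) (h1 : x < y) (h2 : u < v),
    (x ≤ u ∨ u ≤ x) → (x ≤ v ∨ v ≤ x) → (y ≤ u ∨ u ≤ y) → (y ≤ v ∨ v ≤ y) →
      σ ⟨(x, y), h1⟩ = σ ⟨(u, v), h2⟩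

section Statement15Aux

open Finset

variable {K X : Type*} [Field K] [PartialOrder X] [DecidableEq X]

/-- Indicator function with values in `K`. -/
def ind (K : Type*) [Field K] {X : Type*} [DecidableEq X] (w x : X) : K :=
  if w = x then 1 else 0

lemma sigVal_of_lt {σ : LtPairs X → K} {x y : X} (h : x < y) :
    sigVal σ x y = σ ⟨(x, y), h⟩ := dif_pos h

lemma sigVal_of_not_lt {σ : LtPairs X → K} {x y : X} (h : ¬ x < y) :
    sigVal σ x y = 0 := dif_neg h

/-- Edge weight used to define the diagonal potential. -/
def Ew (σ : LtPairs X → K) (w a b : X) : K :=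
  sigVal σ a b * (ind K w a - ind K w b) - sigVal σ b a * (ind K w b - ind K w a)

lemma Ew_antisymm (σ : LtPairs X → K) (w a b : X) : Ew σ w a b = - Ew σ w b a := by
  unfold Ew; ring

lemma Ew_of_lt {σ : LtPairs X → K} {a b : X} (w : X) (h : a < b) :
    Ew σ w a b = sigVal σ a b * (ind K w a - ind K w b) := by
  rw [Ew, sigVal_of_not_lt (asymm h)]; ring

/-- Sum of edge weights along a walk. -/
def wSum (σ : LtPairs X → K) (w : X) (u : ℕ → X) (m : ℕ) : K :=
  ∑ i ∈ Finset.range m, Ew σ w (u i) (u (i + 1))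

lemma no3cycle {a b c : X} (h1 : a ⋖ b ∨ b ⋖ a) (h2 : b ⋖ c ∨ c ⋖ b)
    (h3 : c ⋖ a ∨ a ⋖ c) : False := by
  rcases h1 with h1 | h1 <;> rcases h2 with h2 | h2 <;> rcases h3 with h3 | h3
  · exact lt_irrefl a (h1.lt.trans (h2.lt.trans h3.lt))
  · exact h3.2 h1.lt h2.lt
  · exact h2.2 h3.lt h1.lt
  · exact h1.2 h3.lt h2.lt
  · exact h1.2 h2.lt h3.lt
  · exact h2.2 h1.lt h3.lt
  · exact h3.2 h2.lt h1.lt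
  · exact (lt_asymm (h2.lt.trans h1.lt)) h3.lt

lemma wSum_closed (σ : LtPairs X → K) (hcyc : ConstOnCycles σ) (w : X) :
    ∀ (m : ℕ) (u : ℕ → X), IsWalkOn u m → u m = u 0 → wSum σ w u m = 0 := by
  intro m
  induction m using Nat.strong_induction_on with
  | _ m IH =>
    intro u hw hcl
    by_cases hrep : ∃ i j, i < j ∧ j ≤ m ∧ ¬(i = 0 ∧ j = m) ∧ u i = u j
    · obtain ⟨i, j, hij, hjm, hne, hequ⟩ := hrep
      set d := j - i with hd
      have hd1 : 1 ≤ d := by omega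
      have hdm : d < m := by omega
      set v1 : ℕ → X := fun t => u (i + t) with hv1def
      set v2 : ℕ → X := fun t => if t ≤ i then u t else u (t + d) with hv2def
      have hw1 : IsWalkOn v1 d := by
        intro t ht
        have h := hw (i + t) (by omega)
        simp only [hv1def]
        rw [show i + (t + 1) = i + t + 1 by omega]
        exact h
      have hc1 : v1 d = v1 0 := by
        simp only [hv1def]
        rw [show i + d = j by omega, Nat.add_zero]
        exact hequ.symm
      have hw2 : IsWalkOn v2 (m - d) := by
        intro t ht
        by_cases h1 : t + 1 ≤ i
        · simp only [hv2def]
          rw [if_pos (by omega : t ≤ i), if_pos h1]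
          exact hw t (by omega)
        · by_cases h2 : t ≤ i
          · have hti : t = i := by omega
            subst hti
            simp only [hv2def]
            rw [if_pos le_rfl, if_neg (by omega), show t + 1 + d = j + 1 by omega, hequ]
            exact hw j (by omega)
          · simp only [hv2def]
            rw [if_neg h2, if_neg (by omega), show t + 1 + d = (t + d) + 1 by omega]
            exact hw (t + d) (by omega)
      have hc2 : v2 (m - d) = v2 0 := by
        simp only [hv2def]
        rw [if_pos (Nat.zero_le i)]
        by_cases hjm' : j = m
        · rw [show m - d = i by omega, if_pos le_rfl, hequ, hjm', hcl]
        · rw [if_neg (by omega), show m - d + d = m by omega, hcl]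
      have hkey : wSum σ w u m = wSum σ w v1 d + wSum σ w v2 (m - d) := by
        have e1 : wSum σ w u m
            = ((∑ t ∈ range i, Ew σ w (u t) (u (t + 1)))
              + ∑ t ∈ range d, Ew σ w (u (i + t)) (u (i + t + 1)))
              + ∑ t ∈ range (m - j), Ew σ w (u (i + d + t)) (u (i + d + t + 1)) := by
          have h1 := Finset.sum_range_add (fun t => Ew σ w (u t) (u (t + 1))) (i + d) (m - j)
          have h2 := Finset.sum_range_add (fun t => Ew σ w (u t) (u (t + 1))) i d
          rw [wSum]
          conv_lhs => rw [show m = (i + d) + (m - j) by omega]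
          rw [h1, h2]
        have e2 : wSum σ w v1 d = ∑ t ∈ range d, Ew σ w (u (i + t)) (u (i + t + 1)) := rfl
        have e3 : wSum σ w v2 (m - d)
            = (∑ t ∈ range i, Ew σ w (v2 t) (v2 (t + 1)))
              + ∑ t ∈ range (m - j), Ew σ w (v2 (i + t)) (v2 (i + t + 1)) := by
          have h3 := Finset.sum_range_add (fun t => Ew σ w (v2 t) (v2 (t + 1))) i (m - j)
          rw [wSum]
          conv_lhs => rw [show m - d = i + (m - j) by omega]
          rw [h3]
        have e3a : ∑ t ∈ range i, Ew σ w (v2 t) (v2 (t + 1))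
            = ∑ t ∈ range i, Ew σ w (u t) (u (t + 1)) := by
          refine Finset.sum_congr rfl fun t ht => ?_
          have htlt : t < i := mem_range.1 ht
          simp only [hv2def]
          rw [if_pos (by omega : t ≤ i), if_pos (by omega : t + 1 ≤ i)]
        have e3b : ∑ t ∈ range (m - j), Ew σ w (v2 (i + t)) (v2 (i + t + 1))
            = ∑ t ∈ range (m - j), Ew σ w (u (i + d + t)) (u (i + d + t + 1)) := by
          refine Finset.sum_congr rfl fun t ht => ?_
          have htlt : t < m - j := mem_range.1 ht
          have hvA : v2 (i + t) = u (i + d + t) := by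
            simp only [hv2def]
            by_cases ht0 : t = 0
            · subst ht0
              rw [if_pos (by omega : i + 0 ≤ i)]
              rw [show i + 0 = i by omega, show i + d + 0 = j by omega]
              exact hequ
            · rw [if_neg (by omega), show i + t + d = i + d + t by omega]
          have hvB : v2 (i + t + 1) = u (i + d + t + 1) := by
            simp only [hv2def]
            rw [if_neg (by omega), show i + t + 1 + d = i + d + t + 1 by omega]
          rw [show i + t + 1 = (i + t) + 1 by omega] at hvB
          rw [hvA, hvB]
        rw [e1, e2, e3, e3a, e3b]
        ring
      have z1 := IH d hdm v1 hw1 hc1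
      have z2 := IH (m - d) (by omega) v2 hw2 hc2
      rw [hkey, z1, z2, add_zero]
    · push_neg at hrep
      by_cases h4 : 4 ≤ m
      · have hcycw : IsCycleW u m := by
          refine ⟨hw, hcl, h4, ?_⟩
          intro i hi j hj hij hequ
          rcases lt_trichotomy i j with h | h | h
          · by_cases hx : i = 0 ∧ j = m
            · exact Or.inl hx
            · exact absurd hequ (hrep i j h hj (fun h0 hm' => hx ⟨h0, hm'⟩))
          · exact absurd h hij
          · by_cases hx : j = 0 ∧ i = m
            · exact Or.inr ⟨hx.2, hx.1⟩
            · exact absurd hequ.symm (hrep j i h hi (fun h0 hm' => hx ⟨h0, hm'⟩))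
        obtain ⟨k, hk⟩ := hcyc u m hcycw
        have hterm : ∀ t ∈ range m,
            Ew σ w (u t) (u (t + 1)) = k * (ind K w (u t) - ind K w (u (t + 1))) := by
          intro t ht
          have htm := mem_range.1 ht
          rcases hw t htm with h | h
          · rw [Ew_of_lt w h.lt, sigVal_of_lt h.lt, (hk t htm).1 h.lt]
          · rw [Ew, sigVal_of_not_lt (asymm h.lt), sigVal_of_lt h.lt, (hk t htm).2 h.lt]
            ring
        rw [wSum, Finset.sum_congr rfl hterm, ← Finset.mul_sum,
          Finset.sum_range_sub' (fun t => ind K w (u t)) m, hcl, sub_self, mul_zero]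
      · have hm3 : m ≤ 3 := by omega
        interval_cases m
        · simp [wSum]
        · exfalso
          rcases hw 0 (by omega) with h | h
          · exact h.ne hcl.symm
          · exact h.ne hcl
        · have h2 : u 2 = u 0 := hcl
          rw [wSum, Finset.sum_range_succ, Finset.sum_range_one]
          norm_num
          rw [h2, Ew_antisymm σ w (u 1) (u 0)]
          ring
        · exfalso
          have d01 := hw 0 (by omega)
          have d12 := hw 1 (by omega)
          have d23 := hw 2 (by omega)
          norm_num at d01 d12 d23
          rw [hcl] at d23
          exact no3cycle d01 d12 d23

lemma wSum_concat (σ : LtPairs X → K) (w : X) {p q : ℕ → X} {mp mq : ℕ}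
    (hp : IsWalkOn p mp) (hq : IsWalkOn q mq) (hpq : p mp = q 0)
    (c : ℕ → X) (hc : ∀ t, c t = if t ≤ mp then p t else q (t - mp)) :
    IsWalkOn c (mp + mq) ∧ c 0 = p 0 ∧ c (mp + mq) = q mq
    ∧ wSum σ w c (mp + mq) = wSum σ w p mp + wSum σ w q mq := by
  refine ⟨?_, ?_, ?_, ?_⟩
  · intro t ht
    by_cases h1 : t + 1 ≤ mp
    · rw [hc t, hc (t + 1), if_pos (by omega : t ≤ mp), if_pos h1]
      exact hp t (by omega)
    · by_cases h2 : t ≤ mp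
      · have htm : t = mp := by omega
        subst htm
        rw [hc t, hc (t + 1), if_pos le_rfl, if_neg (by omega),
          show t + 1 - t = 1 by omega, hpq]
        exact hq 0 (by omega)
      · rw [hc t, hc (t + 1), if_neg h2, if_neg (by omega),
          show t + 1 - mp = (t - mp) + 1 by omega]
        exact hq (t - mp) (by omega)
  · rw [hc 0, if_pos (Nat.zero_le mp)]
  · rw [hc (mp + mq)]
    by_cases hmq : mq = 0
    · subst hmq
      rw [if_pos (by omega), Nat.add_zero, hpq]
    · rw [if_neg (by omega), show mp + mq - mp = mq by omega]
  · have h1 := Finset.sum_range_add (fun t => Ew σ w (c t) (c (t + 1))) mp mq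
    rw [wSum, h1, wSum, wSum]
    congr 1
    · refine Finset.sum_congr rfl fun t ht => ?_
      have htlt : t < mp := mem_range.1 ht
      show Ew σ w (c t) (c (t + 1)) = Ew σ w (p t) (p (t + 1))
      rw [hc t, hc (t + 1), if_pos (by omega : t ≤ mp), if_pos (by omega : t + 1 ≤ mp)]
    · refine Finset.sum_congr rfl fun t ht => ?_
      have htlt : t < mq := mem_range.1 ht
      have hvA : c (mp + t) = q t := by
        rw [hc (mp + t)]
        by_cases ht0 : t = 0
        · subst ht0
          rw [if_pos (by omega), Nat.add_zero, hpq]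
        · rw [if_neg (by omega), show mp + t - mp = t by omega]
      have hvB : c (mp + t + 1) = q (t + 1) := by
        rw [hc (mp + t + 1), if_neg (by omega), show mp + t + 1 - mp = t + 1 by omega]
      show Ew σ w (c (mp + t)) (c (mp + t + 1)) = Ew σ w (q t) (q (t + 1))
      rw [hvA, hvB]

lemma wSum_reverse (σ : LtPairs X → K) (w : X) {u : ℕ → X} {m : ℕ} (hu : IsWalkOn u m)
    (r : ℕ → X) (hr : ∀ t, r t = u (m - t)) :
    IsWalkOn r m ∧ r 0 = u m ∧ r m = u 0 ∧ wSum σ w r m = - wSum σ w u m := by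
  refine ⟨?_, by rw [hr 0, Nat.sub_zero], by rw [hr m, Nat.sub_self], ?_⟩
  · intro t ht
    have h := hu (m - t - 1) (by omega)
    rw [show m - t - 1 + 1 = m - t by omega] at h
    rw [hr t, hr (t + 1), show m - (t + 1) = m - t - 1 by omega]
    exact h.symm
  · have hrfl := Finset.sum_range_reflect (fun t => Ew σ w (u t) (u (t + 1))) m
    calc wSum σ w r m
        = ∑ t ∈ range m, - Ew σ w (u (m - 1 - t)) (u (m - 1 - t + 1)) := by
          refine Finset.sum_congr rfl fun t ht => ?_
          have htlt : t < m := mem_range.1 ht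
          show Ew σ w (r t) (r (t + 1)) = _
          rw [hr t, hr (t + 1), show m - (t + 1) = m - 1 - t by omega,
            Ew_antisymm σ w (u (m - t)) (u (m - 1 - t)),
            show m - t = m - 1 - t + 1 by omega]
      _ = - ∑ t ∈ range m, Ew σ w (u (m - 1 - t)) (u (m - 1 - t + 1)) := by
          rw [Finset.sum_neg_distrib]
      _ = - wSum σ w u m := by rw [wSum, hrfl]

lemma wSum_unique (σ : LtPairs X → K) (hcyc : ConstOnCycles σ) (w : X)
    {p q : ℕ → X} {mp mq : ℕ} (hp : IsWalkOn p mp) (hq : IsWalkOn q mq)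
    (h0 : p 0 = q 0) (h1 : p mp = q mq) :
    wSum σ w p mp = wSum σ w q mq := by
  obtain ⟨hrw, hr0, hrm, hrs⟩ :=
    wSum_reverse σ w hq (fun t => q (mq - t)) (fun t => rfl)
  obtain ⟨hcw, hc0, hcm, hcs⟩ :=
    wSum_concat σ w hp hrw (by rw [hr0]; exact h1)
      (fun t => if t ≤ mp then p t else (fun t => q (mq - t)) (t - mp)) (fun t => rfl)
  have hz := wSum_closed σ hcyc w (mp + mq) _ hcw (by rw [hcm, hrm, hc0, h0])
  rw [hcs, hrs] at hz
  linear_combination hz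

lemma exists_g [LocallyFiniteOrder X] (σ : LtPairs X → K) (hconn : ConnectedPoset X)
    (hcyc : ConstOnCycles σ) (hchain : ConstOnChains σ) (u0 : X) :
    ∃ g : X → X → K, (∀ w, g w u0 = 0) ∧
      ∀ w x y, x < y → g w x - g w y = sigVal σ x y * (ind K w x - ind K w y) := by
  choose W M hWk hW0 hWm using fun z => hconn u0 z
  refine ⟨fun w z => - wSum σ w (W z) (M z), ?_, ?_⟩
  · intro w
    have htriv : IsWalkOn (fun _ : ℕ => u0) 0 := fun i hi => absurd hi (Nat.not_lt_zero i)
    have := wSum_unique σ hcyc w (hWk u0) htriv (by rw [hW0]) (by rw [hWm])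
    have h0 : wSum σ w (fun _ : ℕ => u0) 0 = 0 := by simp [wSum]
    rw [h0] at this
    simp [this]
  · have hstep : ∀ w a b : X, (a ⋖ b ∨ b ⋖ a) →
        (- wSum σ w (W b) (M b)) - (- wSum σ w (W a) (M a)) = - Ew σ w a b := by
      intro w a b hab
      set s : ℕ → X := fun t => if t = 0 then a else b with hs
      have hsw : IsWalkOn s 1 := by
        intro i hi
        have : i = 0 := by omega
        subst this
        simpa [hs] using hab
      obtain ⟨hcw, hc0, hcm, hcs⟩ := wSum_concat σ w (hWk a) hsw (by rw [hWm a]; simp [hs])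
        (fun t => if t ≤ M a then W a t else s (t - M a)) (fun t => rfl)
      have huniq := wSum_unique σ hcyc w hcw (hWk b)
        (by rw [hc0, hW0, hW0]) (by rw [hcm, hWm]; simp [hs])
      rw [hcs] at huniq
      have hss : wSum σ w s 1 = Ew σ w a b := by
        rw [wSum, Finset.sum_range_one]
        simp [hs]
      rw [hss] at huniq
      linear_combination huniq
    have main : ∀ n : ℕ, ∀ x y : X, (Finset.Icc x y).card ≤ n → x < y → ∀ w,
        (- wSum σ w (W x) (M x)) - (- wSum σ w (W y) (M y))
          = sigVal σ x y * (ind K w x - ind K w y) := by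
      intro n
      induction n with
      | zero =>
        intro x y hc hxy w
        exfalso
        have hmem : x ∈ Finset.Icc x y := Finset.mem_Icc.2 ⟨le_rfl, hxy.le⟩
        have := Finset.card_pos.2 ⟨x, hmem⟩
        omega
      | succ n IH =>
        intro x y hc hxy w
        by_cases hcov : x ⋖ y
        · have h := hstep w x y (Or.inl hcov)
          rw [Ew_of_lt w hxy] at h
          linear_combination - h
        · obtain ⟨z, hxz, hzy⟩ := exists_lt_lt_of_not_covBy hxy hcov
          have hc1 : (Finset.Icc x z).card ≤ n := by
            have hsub : Finset.Icc x z ⊆ Finset.Icc x y := Finset.Icc_subset_Icc_right hzy.le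
            have hmem : y ∈ Finset.Icc x y := Finset.mem_Icc.2 ⟨hxy.le, le_rfl⟩
            have hnot : y ∉ Finset.Icc x z :=
              fun hmem' => absurd (Finset.mem_Icc.1 hmem').2 hzy.not_ge
            have := Finset.card_lt_card ((Finset.ssubset_iff_of_subset hsub).2 ⟨y, hmem, hnot⟩)
            omega
          have hc2 : (Finset.Icc z y).card ≤ n := by
            have hsub : Finset.Icc z y ⊆ Finset.Icc x y := Finset.Icc_subset_Icc_left hxz.le
            have hmem : x ∈ Finset.Icc x y := Finset.mem_Icc.2 ⟨le_rfl, hxy.le⟩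
            have hnot : x ∉ Finset.Icc z y :=
              fun hmem' => absurd (Finset.mem_Icc.1 hmem').1 hxz.not_ge
            have := Finset.card_lt_card ((Finset.ssubset_iff_of_subset hsub).2 ⟨x, hmem, hnot⟩)
            omega
          have h1 := IH x z hc1 hxz w
          have h2 := IH z y hc2 hzy w
          have e1 : sigVal σ x z = sigVal σ x y := by
            rw [sigVal_of_lt hxz, sigVal_of_lt hxy]
            exact hchain x z x y hxz hxy (Or.inl le_rfl) (Or.inl hxy.le)
              (Or.inr hxz.le) (Or.inl hzy.le)
          have e2 : sigVal σ z y = sigVal σ x y := by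
            rw [sigVal_of_lt hzy, sigVal_of_lt hxy]
            exact hchain z y x y hzy hxy (Or.inr hxz.le) (Or.inl hzy.le)
              (Or.inr hxy.le) (Or.inl le_rfl)
          rw [e1] at h1
          rw [e2] at h2
          linear_combination h1 + h2
    intro w x y hxy
    exact main (Finset.Icc x y).card x y le_rfl hxy w

variable [Fintype X] [LocallyFiniteOrder X]

lemma eI_apply (x y : X) (h : x ≤ y) (u v : X) :
    eI K x y h u v = if x = u ∧ y = v then (1 : K) else 0 := rfl

lemma diag_mul_apply {f : IncidenceAlgebra K X} (hf : IsDiagI f)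
    (b : IncidenceAlgebra K X) (u v : X) (huv : u ≤ v) :
    (f * b) u v = f u u * b u v := by
  rw [IncidenceAlgebra.mul_apply,
    Finset.sum_eq_single_of_mem u (by simp [Finset.mem_Icc, huv])
      (fun z _ hzu => by rw [hf u z (Ne.symm hzu), zero_mul])]

lemma mul_diag_apply {f : IncidenceAlgebra K X} (hf : IsDiagI f)
    (b : IncidenceAlgebra K X) (u v : X) (huv : u ≤ v) :
    (b * f) u v = b u v * f v v := by
  rw [IncidenceAlgebra.mul_apply,
    Finset.sum_eq_single_of_mem v (by simp [Finset.mem_Icc, huv])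
      (fun z _ hzv => by rw [hf z v hzv, mul_zero])]

lemma eI_diag_apply (w z : X) : eI K w w le_rfl z z = ind K w z := by
  rw [eI_apply]
  unfold ind
  by_cases h : w = z <;> simp [h]

/-- The candidate `1/2`-derivation, as a bare function. -/
def phiFun (σ : LtPairs X → K) (g : X → X → K) (f : IncidenceAlgebra K X) :
    IncidenceAlgebra K X :=
  ⟨fun x y => if x = y then ∑ w : X, f w w * g w x else sigVal σ x y * f x y, by
    intro a b hab
    have hne : a ≠ b := fun h => hab (h ▸ le_rfl)
    show (if a = b then ∑ w : X, f w w * g w a else sigVal σ a b * f a b) = 0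
    rw [if_neg hne, IncidenceAlgebra.apply_eq_zero_of_not_le hab f, mul_zero]⟩

lemma phiFun_apply (σ : LtPairs X → K) (g : X → X → K) (f : IncidenceAlgebra K X) (x y : X) :
    phiFun σ g f x y
      = if x = y then ∑ w : X, f w w * g w x else sigVal σ x y * f x y := rfl

/-- The candidate `1/2`-derivation, as a linear map. -/
def phiLin (σ : LtPairs X → K) (g : X → X → K) :
    IncidenceAlgebra K X →ₗ[K] IncidenceAlgebra K X where
  toFun := phiFun σ g
  map_add' f1 f2 := by
    ext u v _
    simp only [phiFun_apply, IncidenceAlgebra.add_apply]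
    split_ifs with h
    · rw [← Finset.sum_add_distrib]
      exact Finset.sum_congr rfl fun w _ => by ring
    · ring
  map_smul' c f := by
    ext u v _
    simp only [phiFun_apply, IncidenceAlgebra.constSMul_apply, smul_eq_mul, RingHom.id_apply]
    split_ifs with h
    · rw [Finset.mul_sum]
      exact Finset.sum_congr rfl fun w _ => by ring
    · ring

lemma phiLin_apply (σ : LtPairs X → K) (g : X → X → K) (f : IncidenceAlgebra K X) (x y : X) :
    phiLin σ g f x y
      = if x = y then ∑ w : X, f w w * g w x else sigVal σ x y * f x y := rfl

lemma phiLin_eI (σ : LtPairs X → K) (g : X → X → K) {x y : X} (h : x < y) (hle : x ≤ y) :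
    phiLin σ g (eI K x y hle) = σ ⟨(x, y), h⟩ • eI K x y hle := by
  ext u v _
  rw [phiLin_apply, IncidenceAlgebra.constSMul_apply, smul_eq_mul]
  by_cases he : u = v
  · subst he
    rw [if_pos rfl]
    have hz : ∀ w ∈ (Finset.univ : Finset X), eI K x y hle w w * g w u = 0 := by
      intro w _
      rw [eI_apply, if_neg (fun hc => h.ne (hc.1.trans hc.2.symm)), zero_mul]
    rw [Finset.sum_eq_zero hz, eI_apply, if_neg (fun hc => h.ne (hc.1.trans hc.2.symm)),
      mul_zero]
  · rw [if_neg he, eI_apply]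
    by_cases hc : x = u ∧ y = v
    · obtain ⟨rfl, rfl⟩ := hc
      rw [if_pos ⟨rfl, rfl⟩, sigVal_of_lt h, mul_one]
    · rw [if_neg hc, mul_zero, mul_zero]

lemma phiLin_halfDer [CharZero K] (σ : LtPairs X → K) (g : X → X → K)
    (hchain : ConstOnChains σ)
    (hgStar : ∀ w x y, x < y → g w x - g w y = sigVal σ x y * (ind K w x - ind K w y)) :
    IsHalfDerivation K (IncidenceAlgebra K X) (phiLin σ g) := by
  intro a b
  ext x y hxy
  rw [Ring.lie_def, Ring.lie_def, Ring.lie_def]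
  have diag0 : ∀ (f1 f2 : IncidenceAlgebra K X) (z : X), (f1 * f2 - f2 * f1) z z = 0 := by
    intro f1 f2 z
    rw [IncidenceAlgebra.sub_apply, IncidenceAlgebra.mul_apply, IncidenceAlgebra.mul_apply,
      Finset.Icc_self, Finset.sum_singleton, Finset.sum_singleton]
    ring
  rcases eq_or_lt_of_le hxy with rfl | hlt
  · rw [phiLin_apply, if_pos rfl, IncidenceAlgebra.constSMul_apply,
      IncidenceAlgebra.add_apply, diag0, diag0]
    have hz : ∀ w ∈ (Finset.univ : Finset X), (a * b - b * a) w w * g w x = 0 := by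
      intro w _
      rw [diag0, zero_mul]
    rw [Finset.sum_eq_zero hz]
    simp
  · have hne : x ≠ y := ne_of_lt hlt
    have hIcc : Finset.Icc x y = insert x (insert y (Finset.Ioo x y)) := by
      ext z
      simp only [Finset.mem_Icc, Finset.mem_insert, Finset.mem_Ioo]
      constructor
      · rintro ⟨h1, h2⟩
        rcases h1.lt_or_eq with h1' | h1'
        · rcases h2.lt_or_eq with h2' | h2'
          · exact Or.inr (Or.inr ⟨h1', h2'⟩)
          · exact Or.inr (Or.inl h2')
        · exact Or.inl h1'.symm
      · rintro (rfl | rfl | ⟨hz1, hz2⟩)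
        · exact ⟨le_rfl, hxy⟩
        · exact ⟨hxy, le_rfl⟩
        · exact ⟨hz1.le, hz2.le⟩
    have hx_not : x ∉ insert y (Finset.Ioo x y) := by
      simp only [Finset.mem_insert, Finset.mem_Ioo, not_or]
      exact ⟨hne, fun h => lt_irrefl x h.1⟩
    have hy_not : y ∉ Finset.Ioo x y := fun h => lt_irrefl y (Finset.mem_Ioo.1 h).2
    have hsplit : ∀ F : X → K,
        ∑ z ∈ Finset.Icc x y, F z = F x + (F y + ∑ z ∈ Finset.Ioo x y, F z) := by
      intro F
      rw [hIcc, Finset.sum_insert hx_not, Finset.sum_insert hy_not]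
    have hmidL : ∀ z ∈ Finset.Ioo x y, sigVal σ x z = sigVal σ x y := by
      intro z hz
      obtain ⟨h1, h2⟩ := Finset.mem_Ioo.1 hz
      rw [sigVal_of_lt h1, sigVal_of_lt hlt]
      exact hchain x z x y h1 hlt (Or.inl le_rfl) (Or.inl hxy) (Or.inr h1.le) (Or.inl h2.le)
    have hmidR : ∀ z ∈ Finset.Ioo x y, sigVal σ z y = sigVal σ x y := by
      intro z hz
      obtain ⟨h1, h2⟩ := Finset.mem_Ioo.1 hz
      rw [sigVal_of_lt h2, sigVal_of_lt hlt]
      exact hchain z y x y h2 hlt (Or.inr h1.le) (Or.inl h2.le) (Or.inr hxy) (Or.inl le_rfl)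
    have ediag : ∀ (f : IncidenceAlgebra K X) (z : X),
        phiLin σ g f z z = ∑ w : X, f w w * g w z :=
      fun f z => by rw [phiLin_apply, if_pos rfl]
    have eoffa : phiLin σ g a x y = sigVal σ x y * a x y := by rw [phiLin_apply, if_neg hne]
    have eoffb : phiLin σ g b x y = sigVal σ x y * b x y := by rw [phiLin_apply, if_neg hne]
    rw [phiLin_apply, if_neg hne, IncidenceAlgebra.constSMul_apply, IncidenceAlgebra.add_apply,
      IncidenceAlgebra.sub_apply, IncidenceAlgebra.sub_apply, IncidenceAlgebra.sub_apply,
      IncidenceAlgebra.mul_apply, IncidenceAlgebra.mul_apply, IncidenceAlgebra.mul_apply,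
      IncidenceAlgebra.mul_apply, IncidenceAlgebra.mul_apply, IncidenceAlgebra.mul_apply,
      smul_eq_mul]
    simp only [hsplit]
    have hM1 : ∑ z ∈ Finset.Ioo x y, phiLin σ g a x z * b z y
        = sigVal σ x y * ∑ z ∈ Finset.Ioo x y, a x z * b z y := by
      rw [Finset.mul_sum]
      refine Finset.sum_congr rfl fun z hz => ?_
      obtain ⟨h1, h2⟩ := Finset.mem_Ioo.1 hz
      rw [phiLin_apply, if_neg h1.ne, hmidL z hz]
      ring
    have hM2 : ∑ z ∈ Finset.Ioo x y, b x z * phiLin σ g a z y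
        = sigVal σ x y * ∑ z ∈ Finset.Ioo x y, b x z * a z y := by
      rw [Finset.mul_sum]
      refine Finset.sum_congr rfl fun z hz => ?_
      obtain ⟨h1, h2⟩ := Finset.mem_Ioo.1 hz
      rw [phiLin_apply, if_neg h2.ne, hmidR z hz]
      ring
    have hM3 : ∑ z ∈ Finset.Ioo x y, a x z * phiLin σ g b z y
        = sigVal σ x y * ∑ z ∈ Finset.Ioo x y, a x z * b z y := by
      rw [Finset.mul_sum]
      refine Finset.sum_congr rfl fun z hz => ?_
      obtain ⟨h1, h2⟩ := Finset.mem_Ioo.1 hz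
      rw [phiLin_apply, if_neg h2.ne, hmidR z hz]
      ring
    have hM4 : ∑ z ∈ Finset.Ioo x y, phiLin σ g b x z * a z y
        = sigVal σ x y * ∑ z ∈ Finset.Ioo x y, b x z * a z y := by
      rw [Finset.mul_sum]
      refine Finset.sum_congr rfl fun z hz => ?_
      obtain ⟨h1, h2⟩ := Finset.mem_Ioo.1 hz
      rw [phiLin_apply, if_neg h1.ne, hmidL z hz]
      ring
    rw [hM1, hM2, hM3, hM4, ediag a x, ediag a y, ediag b x, ediag b y, eoffa, eoffb]
    have hDa : (∑ w : X, a w w * g w x) - (∑ w : X, a w w * g w y)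
        = sigVal σ x y * (a x x - a y y) := by
      rw [← Finset.sum_sub_distrib]
      have hterm : ∀ w ∈ (Finset.univ : Finset X), a w w * g w x - a w w * g w y
          = (if w = x then sigVal σ x y * a w w else 0)
            - (if w = y then sigVal σ x y * a w w else 0) := by
        intro w _
        rw [← mul_sub, hgStar w x y hlt]
        unfold ind
        by_cases hw1 : w = x
        · simp only [hw1, eq_self_iff_true, if_true, if_neg hne]
          ring
        · by_cases hw2 : w = y
          · simp only [hw2, eq_self_iff_true, if_true,
              if_neg (fun hh : y = x => hne hh.symm)]
            ring
          · simp only [if_neg hw1, if_neg hw2]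
            ring
      rw [Finset.sum_congr rfl hterm, Finset.sum_sub_distrib,
        Finset.sum_ite_eq' Finset.univ x (fun w => sigVal σ x y * a w w),
        Finset.sum_ite_eq' Finset.univ y (fun w => sigVal σ x y * a w w),
        if_pos (Finset.mem_univ x), if_pos (Finset.mem_univ y)]
      ring
    have hDb : (∑ w : X, b w w * g w x) - (∑ w : X, b w w * g w y)
        = sigVal σ x y * (b x x - b y y) := by
      rw [← Finset.sum_sub_distrib]
      have hterm : ∀ w ∈ (Finset.univ : Finset X), b w w * g w x - b w w * g w y
          = (if w = x then sigVal σ x y * b w w else 0)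
            - (if w = y then sigVal σ x y * b w w else 0) := by
        intro w _
        rw [← mul_sub, hgStar w x y hlt]
        unfold ind
        by_cases hw1 : w = x
        · simp only [hw1, eq_self_iff_true, if_true, if_neg hne]
          ring
        · by_cases hw2 : w = y
          · simp only [hw2, eq_self_iff_true, if_true,
              if_neg (fun hh : y = x => hne hh.symm)]
            ring
          · simp only [if_neg hw1, if_neg hw2]
            ring
      rw [Finset.sum_congr rfl hterm, Finset.sum_sub_distrib,
        Finset.sum_ite_eq' Finset.univ x (fun w => sigVal σ x y * b w w),
        Finset.sum_ite_eq' Finset.univ y (fun w => sigVal σ x y * b w w),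
        if_pos (Finset.mem_univ x), if_pos (Finset.mem_univ y)]
      ring
    linear_combination -(2⁻¹ * b x y) * hDa + (2⁻¹ * a x y) * hDb

lemma IA_sum_apply {ι : Type*} (s : Finset ι) (F : ι → IncidenceAlgebra K X) (a b : X) :
    (∑ i ∈ s, F i) a b = ∑ i ∈ s, F i a b := by
  induction s using Finset.cons_induction with
  | empty => rfl
  | cons i s hi IH => rw [Finset.sum_cons, Finset.sum_cons, IncidenceAlgebra.add_apply, IH]

/-- `e_{xy}` with the inequality test built in. -/
def eI' (K : Type*) {X : Type*} [Field K] [PartialOrder X] [DecidableEq X] (x y : X) :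
    IncidenceAlgebra K X :=
  if h : x ≤ y then eI K x y h else 0

lemma expand_basis (f : IncidenceAlgebra K X) :
    f = ∑ x : X, ∑ y : X, f x y • eI' K x y := by
  ext u v huv
  rw [IA_sum_apply, Finset.sum_eq_single u ?_ ?_]
  · rw [IA_sum_apply, Finset.sum_eq_single v ?_ ?_]
    · rw [IncidenceAlgebra.constSMul_apply, smul_eq_mul]
      unfold eI'
      rw [dif_pos huv, eI_apply, if_pos ⟨rfl, rfl⟩, mul_one]
    · intro yy _ hyy
      rw [IncidenceAlgebra.constSMul_apply, smul_eq_mul]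
      unfold eI'
      split_ifs with h
      · rw [eI_apply, if_neg (fun hc => hyy hc.2), mul_zero]
      · rw [IncidenceAlgebra.zero_apply, mul_zero]
    · intro h
      exact absurd (Finset.mem_univ v) h
  · intro xx _ hxx
    rw [IA_sum_apply]
    apply Finset.sum_eq_zero
    intro yy _
    rw [IncidenceAlgebra.constSMul_apply, smul_eq_mul]
    unfold eI'
    split_ifs with h
    · rw [eI_apply, if_neg (fun hc => hxx hc.1), mul_zero]
    · rw [IncidenceAlgebra.zero_apply, mul_zero]
  · intro h
    exact absurd (Finset.mem_univ u) h

lemma psi_eq [CharZero K] (σ : LtPairs X → K) (g : X → X → K) (hconn : ConnectedPoset X)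
    (u0 : X) (hg0 : ∀ w, g w u0 = 0)
    (hgStar : ∀ w x y, x < y → g w x - g w y = sigVal σ x y * (ind K w x - ind K w y))
    (ψ : IncidenceAlgebra K X →ₗ[K] IncidenceAlgebra K X)
    (hder : IsHalfDerivation K (IncidenceAlgebra K X) ψ)
    (hdiag : ∀ f : IncidenceAlgebra K X, IsDiagI f → IsDiagI (ψ f))
    (hoff : ∀ (x y : X) (h : x < y), ψ (eI K x y h.le) = σ ⟨(x, y), h⟩ • eI K x y h.le)
    (hnorm : ∀ x : X, ψ (eI K x x le_rfl) u0 u0 = 0) :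
    ψ = phiLin σ g := by
  have hdiagE : ∀ w : X, IsDiagI (eI K w w le_rfl) := by
    intro w u v huv
    rw [eI_apply, if_neg]
    rintro ⟨rfl, rfl⟩
    exact huv rfl
  have hDstar : ∀ w x y : X, x < y →
      ψ (eI K w w le_rfl) x x - ψ (eI K w w le_rfl) y y
        = sigVal σ x y * (ind K w x - ind K w y) := by
    intro w x y hxy
    have hew : IsDiagI (eI K w w le_rfl) := hdiagE w
    have hbr : ⁅eI K w w le_rfl, eI K x y hxy.le⁆
        = (ind K w x - ind K w y) • eI K x y hxy.le := by
      rw [Ring.lie_def]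
      ext u v huv
      rw [IncidenceAlgebra.sub_apply, diag_mul_apply hew _ u v huv,
        mul_diag_apply hew _ u v huv, IncidenceAlgebra.constSMul_apply, smul_eq_mul,
        eI_diag_apply, eI_diag_apply]
      by_cases hb : x = u ∧ y = v
      · obtain ⟨rfl, rfl⟩ := hb
        ring
      · rw [eI_apply, if_neg hb]
        ring
    have heq := hder (eI K w w le_rfl) (eI K x y hxy.le)
    rw [hbr, map_smul, hoff x y hxy, Ring.lie_def, Ring.lie_def] at heq
    have hval := congrArg (fun fz : IncidenceAlgebra K X => fz x y) heq
    simp only [IncidenceAlgebra.constSMul_apply, IncidenceAlgebra.add_apply,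
      IncidenceAlgebra.sub_apply, smul_eq_mul] at hval
    rw [diag_mul_apply (hdiag _ hew) _ x y hxy.le,
      mul_diag_apply (hdiag _ hew) _ x y hxy.le,
      diag_mul_apply hew _ x y hxy.le, mul_diag_apply hew _ x y hxy.le] at hval
    simp only [IncidenceAlgebra.constSMul_apply, smul_eq_mul, eI_diag_apply] at hval
    have hbxy : eI K x y hxy.le x y = 1 := by rw [eI_apply, if_pos ⟨rfl, rfl⟩]
    rw [hbxy] at hval
    rw [sigVal_of_lt hxy]
    linear_combination (-2 : K) * hval
  have hDg : ∀ w z : X, ψ (eI K w w le_rfl) z z = g w z := by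
    intro w z
    have hstep : ∀ a b : X, a < b →
        ψ (eI K w w le_rfl) a a - g w a = ψ (eI K w w le_rfl) b b - g w b := by
      intro a b hab
      have h1 := hDstar w a b hab
      have h2 := hgStar w a b hab
      linear_combination h1 - h2
    obtain ⟨u, m, hwj, h0, hm⟩ := hconn u0 z
    have hwalk : ∀ i ≤ m, ψ (eI K w w le_rfl) (u i) (u i) - g w (u i)
        = ψ (eI K w w le_rfl) (u 0) (u 0) - g w (u 0) := by
      intro i
      induction i with
      | zero => intro _; rfl
      | succ i IH =>
        intro hi
        rw [← IH (by omega)]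
        rcases hwj i (by omega) with h | h
        · exact (hstep (u i) (u (i + 1)) h.lt).symm
        · exact hstep (u (i + 1)) (u i) h.lt
    have hz := hwalk m le_rfl
    rw [h0, hm] at hz
    have hn1 : ψ (eI K w w le_rfl) u0 u0 = 0 := hnorm w
    have hn2 : g w u0 = 0 := hg0 w
    rw [hn1, hn2] at hz
    linear_combination hz
  apply LinearMap.ext
  intro f
  have hexp := expand_basis (K := K) (X := X) f
  rw [hexp, map_sum, map_sum]
  refine Finset.sum_congr rfl fun x _ => ?_
  rw [map_sum, map_sum]
  refine Finset.sum_congr rfl fun y _ => ?_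
  rw [map_smul, map_smul]
  congr 1
  unfold eI'
  split_ifs with hle
  · rcases eq_or_lt_of_le hle with rfl | hlt
    · ext u v _
      by_cases huvne : u = v
      · subst huvne
        rw [phiLin_apply, if_pos rfl]
        have hterm : ∀ w ∈ (Finset.univ : Finset X),
            eI K x x hle w w * g w u = if w = x then g w u else 0 := by
          intro w _
          rw [eI_apply]
          by_cases h : x = w
          · subst h
            rw [if_pos ⟨rfl, rfl⟩, if_pos rfl, one_mul]
          · rw [if_neg (fun hc => h hc.1), if_neg (fun hc => h hc.symm), zero_mul]
        rw [Finset.sum_congr rfl hterm, Finset.sum_ite_eq' Finset.univ x (fun w => g w u),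
          if_pos (Finset.mem_univ x)]
        exact hDg x u
      · rw [hdiag _ (hdiagE x) u v huvne, phiLin_apply, if_neg huvne, eI_apply,
          if_neg (fun hc => huvne (hc.1.symm.trans hc.2)), mul_zero]
    · rw [hoff x y hlt, phiLin_eI σ g hlt hle]
  · rw [map_zero, map_zero]

end Statement15Aux

/-- for `σ` constant on chains and cycles, there is a unique
diagonality-preserving `1/2`-derivation `φ` of `I(X,K)` with `φ e_{xy} = σ(x,y) e_{xy}`
for `x < y` and `φ(e_x)(u0, u0) = 0` for all `x`. -/
theorem statement15 (K X : Type*) [Field K] [CharZero K] [PartialOrder X] [Fintype X]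
    [LocallyFiniteOrder X] [DecidableEq X] (hconn : ConnectedPoset X) (u0 : X)
    (σ : LtPairs X → K) (hchain : ConstOnChains σ) (hcyc : ConstOnCycles σ) :
    ∃! φ : IncidenceAlgebra K X →ₗ[K] IncidenceAlgebra K X,
      IsHalfDerivation K (IncidenceAlgebra K X) φ ∧
      (∀ f : IncidenceAlgebra K X, IsDiagI f → IsDiagI (φ f)) ∧
      (∀ (x y : X) (h : x < y), φ (eI K x y h.le) = σ ⟨(x, y), h⟩ • eI K x y h.le) ∧
      (∀ x : X, φ (eI K x x le_rfl) u0 u0 = 0) := by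
  obtain ⟨g, hg0, hgStar⟩ := exists_g σ hconn hcyc hchain u0
  refine ⟨phiLin σ g, ⟨phiLin_halfDer σ g hchain hgStar, ?_, ?_, ?_⟩, ?_⟩
  · intro f hf u v huv
    rw [phiLin_apply, if_neg huv, hf u v huv, mul_zero]
  · intro x y h
    exact phiLin_eI σ g h h.le
  · intro x
    rw [phiLin_apply, if_pos rfl]
    apply Finset.sum_eq_zero
    intro w _
    rw [hg0 w, mul_zero]
  · rintro ψ ⟨h1, h2, h3, h4⟩
    exact psi_eq σ g hconn u0 hg0 hgStar ψ h1 h2 h3 h4
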